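/- Let d be a positive integer divisible by 8, let p_{1,0} < p_{1,1} < … < p_{d,0} < p_{d,1} be the first 2d primes, and let B_d = {Π_{i=1}^d p_{i,u_i} : u ∈ {0,1}^d}. Then there exists a subset W ⊆ B_d such that for every f : W → {-1,+1} there is a positive integer a with |Σ_{b ∈ W, a ∣ b} f(b)| ≥ 2^{d/16}/(2e). In other words, the hereditary discrepancy of the set system of homogeneous arithmetic progressions (divisibility sets {b : a ∣ b}) restricted to B_d is at least 2^{d/16}/(2e). -/

import Mathlib

open Finset

/-- The first `2d` primes in increasing order, organized into `d` consecutive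
pairs: `p_{i,b}` is the `(2i + b)`-th prime (0-indexed), so
`p_{1,0} < p_{1,1} < … < p_{d,0} < p_{d,1}`. -/
noncomputable def pPrime {d : ℕ} (i : Fin d) (b : Bool) : ℕ :=
  Nat.nth Nat.Prime (2 * (i : ℕ) + if b then 1 else 0)

/-- For `u ∈ {0,1}^d`, the squarefree integer `b_u = ∏_{i=1}^d p_{i, uᵢ}`. -/
noncomputable def bOf {d : ℕ} (u : Fin d → Bool) : ℕ :=
  ∏ i : Fin d, pPrime i (u i)

/-- The set `B_d = {∏_{i=1}^d p_{i,uᵢ} : u ∈ {0,1}^d}`. -/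
noncomputable def Bset (d : ℕ) : Finset ℕ :=
  Finset.univ.image (fun u : Fin d → Bool => bOf u)

/-! ### Combinatorial core: discrepancy of rectangles in `[8]^m` -/

set_option maxRecDepth 100000 in
lemma card_pair_mem : ∀ a b : Fin 8,
    ((univ : Finset (Finset (Fin 8))).filter (fun c => a ∈ c ∧ b ∈ c)).card
      = if a = b then 128 else 64 := by decide

noncomputable def ind {m : ℕ} (C : Fin m → Finset (Fin 8)) (v : Fin m → Fin 8) : ℝ :=
  ∏ j, (if v j ∈ C j then (1:ℝ) else 0)

noncomputable def rsum {m : ℕ} (x : (Fin m → Fin 8) → ℝ) (C : Fin m → Finset (Fin 8)) : ℝ :=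
  ∑ v ∈ univ.filter (fun v : Fin m → Fin 8 => ∀ j, v j ∈ C j), x v

lemma rsum_eq {m : ℕ} (x : (Fin m → Fin 8) → ℝ) (C : Fin m → Finset (Fin 8)) :
    rsum x C = ∑ v, ind C v * x v := by
  rw [rsum, sum_filter]
  refine Finset.sum_congr rfl fun v _ => ?_
  rw [ind, prod_boole]
  by_cases h : ∀ j, v j ∈ C j
  · simp [h]
  · rw [if_neg (by simpa using h), if_neg (by simpa using h), zero_mul]

lemma K_eq {m : ℕ} (v w : Fin m → Fin 8) :
    ∑ C : Fin m → Finset (Fin 8), ind C v * ind C w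
      = (64:ℝ)^m * ∏ j, (if v j = w j then (2:ℝ) else 1) := by
  have h1 : ∀ C : Fin m → Finset (Fin 8), ind C v * ind C w
      = ∏ j, ((if v j ∈ C j then (1:ℝ) else 0) * (if w j ∈ C j then (1:ℝ) else 0)) := by
    intro C; rw [ind, ind, ← prod_mul_distrib]
  simp_rw [h1]
  rw [← Fintype.piFinset_univ, ← prod_univ_sum
    (fun _ => (univ : Finset (Finset (Fin 8))))
    (fun j c => (if v j ∈ c then (1:ℝ) else 0) * (if w j ∈ c then (1:ℝ) else 0))]
  rw [show (64:ℝ)^m = ∏ _j : Fin m, (64:ℝ) by simp, ← prod_mul_distrib]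
  refine Finset.prod_congr rfl fun j _ => ?_
  have : ∀ c : Finset (Fin 8), (if v j ∈ c then (1:ℝ) else 0) * (if w j ∈ c then (1:ℝ) else 0)
      = if v j ∈ c ∧ w j ∈ c then (1:ℝ) else 0 := by
    intro c; split_ifs with h1 h2 h3 <;> simp_all
  simp_rw [this, sum_boole, card_pair_mem (v j) (w j)]
  split_ifs <;> norm_num

/-- projection onto coordinates in S (others set to 0) -/
def proj {m : ℕ} (S : Finset (Fin m)) (v : Fin m → Fin 8) : Fin m → Fin 8 :=
  fun j => if j ∈ S then v j else 0

lemma proj_eq_iff {m : ℕ} (S : Finset (Fin m)) (v w : Fin m → Fin 8) :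
    proj S v = proj S w ↔ ∀ j ∈ S, v j = w j := by
  constructor
  · intro h j hj
    have := congrFun h j
    simpa [proj, hj] using this
  · intro h; funext j
    by_cases hj : j ∈ S <;> simp [proj, hj, h]

lemma prod_two_eq {m : ℕ} (v w : Fin m → Fin 8) :
    ∏ j, (if v j = w j then (2:ℝ) else 1)
      = ∑ S ∈ (univ : Finset (Fin m)).powerset, (if proj S v = proj S w then (1:ℝ) else 0) := by
  have : ∀ j : Fin m, (if v j = w j then (2:ℝ) else 1)
      = (if v j = w j then (1:ℝ) else 0) + 1 := by intro j; split_ifs <;> norm_num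
  simp_rw [this]
  rw [prod_add]
  refine Finset.sum_congr rfl fun S _ => ?_
  rw [prod_const_one, mul_one, prod_boole]
  by_cases h : proj S v = proj S w
  · rw [if_pos h, if_pos (fun i _ => (proj_eq_iff S v w).mp h i ‹_›)]
  · rw [if_neg h, if_neg (fun hh => h ((proj_eq_iff S v w).mpr fun j hj => hh j hj))]

noncomputable def Fib {m : ℕ} (x : (Fin m → Fin 8) → ℝ) (S : Finset (Fin m))
    (r : Fin m → Fin 8) : ℝ :=
  ∑ v ∈ univ.filter (fun v => proj S v = r), x v

lemma Q_eq {m : ℕ} (x : (Fin m → Fin 8) → ℝ) (S : Finset (Fin m)) :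
    ∑ v, ∑ w, x v * x w * (if proj S v = proj S w then (1:ℝ) else 0)
      = ∑ r, (Fib x S r)^2 := by
  have inner : ∀ v, ∑ w, x v * x w * (if proj S v = proj S w then (1:ℝ) else 0)
      = x v * Fib x S (proj S v) := by
    intro v
    rw [Fib, sum_filter, mul_sum]
    refine Finset.sum_congr rfl fun w _ => ?_
    by_cases h : proj S v = proj S w
    · rw [if_pos h, if_pos h.symm]; ring
    · rw [if_neg h, if_neg (fun hh => h hh.symm)]; ring
  simp_rw [inner]
  rw [← Finset.sum_fiberwise (univ : Finset (Fin m → Fin 8)) (proj S)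
    (fun v => x v * Fib x S (proj S v))]
  refine Finset.sum_congr rfl fun r _ => ?_
  rw [sum_filter]
  have step : ∀ a : Fin m → Fin 8,
      (if proj S a = r then x a * Fib x S (proj S a) else 0)
        = (if proj S a = r then x a else 0) * Fib x S r := by
    intro a
    by_cases h : proj S a = r
    · rw [if_pos h, if_pos h, h]
    · rw [if_neg h, if_neg h, zero_mul]
  simp_rw [step]
  rw [← sum_mul, sq, Fib, sum_filter]

lemma Q_univ {m : ℕ} (x : (Fin m → Fin 8) → ℝ) :
    ∑ r, (Fib x (univ : Finset (Fin m)) r)^2 = ∑ v, (x v)^2 := by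
  refine Finset.sum_congr rfl fun r _ => ?_
  have : Fib x univ r = x r := by
    rw [Fib]
    have hp : ∀ v : Fin m → Fin 8, proj univ v = v := by
      intro v; funext j; simp [proj]
    simp_rw [hp]
    rw [Finset.filter_eq' univ r, if_pos (mem_univ r), sum_singleton]
  rw [this]

lemma T_expand {m : ℕ} (x : (Fin m → Fin 8) → ℝ) :
    ∑ C : Fin m → Finset (Fin 8), (rsum x C)^2
      = (64:ℝ)^m * ∑ S ∈ (univ : Finset (Fin m)).powerset, ∑ r, (Fib x S r)^2 := by
  have h1 : ∀ C : Fin m → Finset (Fin 8), (rsum x C)^2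
      = ∑ v, ∑ w, (ind C v * x v) * (ind C w * x w) := by
    intro C; rw [rsum_eq, sq, sum_mul_sum]
  simp_rw [h1]
  rw [Finset.sum_comm]
  have h2 : ∀ v : Fin m → Fin 8,
      (∑ C : Fin m → Finset (Fin 8), ∑ w, (ind C v * x v) * (ind C w * x w))
      = ∑ w, ∑ C : Fin m → Finset (Fin 8), (ind C v * x v) * (ind C w * x w) :=
    fun v => Finset.sum_comm
  simp_rw [h2]
  have h3 : ∀ v w : Fin m → Fin 8,
      (∑ C : Fin m → Finset (Fin 8), (ind C v * x v) * (ind C w * x w))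
      = (x v * x w) * ∑ C : Fin m → Finset (Fin 8), ind C v * ind C w := by
    intro v w
    rw [mul_sum]
    exact Finset.sum_congr rfl fun C _ => by ring
  simp_rw [h3, K_eq, prod_two_eq]
  have h5 : ∀ v w : Fin m → Fin 8,
      x v * x w * ((64:ℝ)^m * ∑ S ∈ (univ : Finset (Fin m)).powerset,
        (if proj S v = proj S w then (1:ℝ) else 0))
      = ∑ S ∈ (univ : Finset (Fin m)).powerset,
          (64:ℝ)^m * (x v * x w * (if proj S v = proj S w then (1:ℝ) else 0)) := by
    intro v w
    rw [Finset.mul_sum, Finset.mul_sum]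
    exact Finset.sum_congr rfl fun S _ => by ring
  simp_rw [h5]
  have h6 : ∀ v : Fin m → Fin 8,
      (∑ w, ∑ S ∈ (univ : Finset (Fin m)).powerset,
        (64:ℝ)^m * (x v * x w * (if proj S v = proj S w then (1:ℝ) else 0)))
      = ∑ S ∈ (univ : Finset (Fin m)).powerset, ∑ w,
        (64:ℝ)^m * (x v * x w * (if proj S v = proj S w then (1:ℝ) else 0)) :=
    fun v => Finset.sum_comm
  simp_rw [h6]
  rw [Finset.sum_comm]
  rw [Finset.mul_sum]
  refine Finset.sum_congr rfl fun S _ => ?_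
  rw [← Q_eq, Finset.mul_sum]
  exact Finset.sum_congr rfl fun v _ => by rw [Finset.mul_sum]

lemma core {m : ℕ} (x : (Fin m → Fin 8) → ℝ) (hx : ∀ v, (x v)^2 = 1) :
    ∃ C : Fin m → Finset (Fin 8), (2:ℝ)^m ≤ (rsum x C)^2 := by
  have hT : (64:ℝ)^m * (8:ℝ)^m ≤ ∑ C : Fin m → Finset (Fin 8), (rsum x C)^2 := by
    rw [T_expand]
    have h8 : ∑ v : Fin m → Fin 8, (x v)^2 = (8:ℝ)^m := by
      simp_rw [hx]
      rw [sum_const, card_univ, Fintype.card_fun, nsmul_eq_mul]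
      push_cast
      norm_num
    have hQ : ((8:ℝ)^m) ≤ ∑ S ∈ (univ : Finset (Fin m)).powerset, ∑ r, (Fib x S r)^2 := by
      rw [← h8, ← Q_univ x]
      exact Finset.single_le_sum (f := fun S => ∑ r, (Fib x S r)^2)
        (fun S _ => Finset.sum_nonneg fun r _ => sq_nonneg _)
        (Finset.mem_powerset_self _)
    exact mul_le_mul_of_nonneg_left hQ (by positivity)
  obtain ⟨C, _, hC⟩ := Finset.exists_max_image (univ : Finset (Fin m → Finset (Fin 8)))
    (fun C => (rsum x C)^2) ⟨(fun _ => ∅), mem_univ _⟩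
  refine ⟨C, ?_⟩
  have hsum : ∑ C' : Fin m → Finset (Fin 8), (rsum x C')^2
      ≤ (256:ℝ)^m * (rsum x C)^2 := by
    calc ∑ C' : Fin m → Finset (Fin 8), (rsum x C')^2
        ≤ ∑ _C' : Fin m → Finset (Fin 8), (rsum x C)^2 :=
          Finset.sum_le_sum fun C' _ => hC C' (mem_univ _)
      _ = (256:ℝ)^m * (rsum x C)^2 := by
          rw [sum_const, card_univ, Fintype.card_fun, nsmul_eq_mul]
          push_cast
          norm_num [Fintype.card_finset]
  have key : (256:ℝ)^m * (2:ℝ)^m ≤ (256:ℝ)^m * (rsum x C)^2 := by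
    calc (256:ℝ)^m * 2^m = 64^m * 8^m := by rw [← mul_pow, ← mul_pow]; norm_num
      _ ≤ _ := le_trans hT hsum
  exact le_of_mul_le_mul_left key (by positivity)

/-! ### Number-theoretic layer -/

lemma pPrime_prime {d : ℕ} (k : Fin d) (c : Bool) : (pPrime k c).Prime :=
  Nat.prime_nth_prime _

lemma pPrime_dvd_bOf_iff {d : ℕ} (k : Fin d) (c : Bool) (u : Fin d → Bool) :
    pPrime k c ∣ bOf u ↔ u k = c := by
  constructor
  · intro h
    obtain ⟨i, -, hi⟩ := (pPrime_prime k c).prime.exists_mem_finset_dvd h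
    have heq := (Nat.prime_dvd_prime_iff_eq (pPrime_prime k c) (pPrime_prime i (u i))).mp hi
    have h2 := Nat.nth_injective Nat.infinite_setOf_prime heq
    unfold pPrime at h2
    have hki : (k:ℕ) = (i:ℕ) ∧ c = u i := by
      cases c <;> cases hui : u i <;> rw [hui] at h2 <;> simp at h2 ⊢ <;> omega
    obtain ⟨h3, h4⟩ := hki
    rw [show k = i from Fin.ext h3, ← h4]
  · intro h
    rw [← h]
    exact Finset.dvd_prod_of_mem _ (Finset.mem_univ k)

lemma bOf_injective {d : ℕ} : Function.Injective (bOf (d := d)) := by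
  intro u u' h
  funext k
  exact ((pPrime_dvd_bOf_iff k (u k) u').mp
    (h ▸ (pPrime_dvd_bOf_iff k (u k) u).mpr rfl)).symm

lemma prod_false_dvd_iff {d : ℕ} (s : Finset (Fin d)) (u : Fin d → Bool) :
    (∏ k ∈ s, pPrime k false) ∣ bOf u ↔ ∀ k ∈ s, u k = false := by
  constructor
  · intro h k hk
    exact (pPrime_dvd_bOf_iff k false u).mp
      (dvd_trans (Finset.dvd_prod_of_mem (fun k => pPrime k false) hk) h)
  · intro h
    have he : ∏ k ∈ s, pPrime k false = ∏ k ∈ s, pPrime k (u k) :=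
      Finset.prod_congr rfl fun k hk => by rw [h k hk]
    rw [he]
    exact Finset.prod_dvd_prod_of_subset s univ _ (Finset.subset_univ s)

/- coordinate bookkeeping -/
def coordJ {m : ℕ} (k : Fin (8 * m)) : Fin m := ⟨(k : ℕ) / 8, by omega⟩
def coordI {m : ℕ} (k : Fin (8 * m)) : Fin 8 := ⟨(k : ℕ) % 8, by omega⟩
def pairK {m : ℕ} (j : Fin m) (i : Fin 8) : Fin (8 * m) :=
  ⟨8 * (j : ℕ) + (i : ℕ), by have := j.isLt; have := i.isLt; omega⟩

lemma coordJ_pairK {m : ℕ} (j : Fin m) (i : Fin 8) : coordJ (pairK j i) = j := by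
  have := i.isLt; apply Fin.ext; simp [coordJ, pairK]; omega

lemma coordI_pairK {m : ℕ} (j : Fin m) (i : Fin 8) : coordI (pairK j i) = i := by
  have := i.isLt; apply Fin.ext; simp [coordI, pairK]

def uOf {m : ℕ} (v : Fin m → Fin 8) : Fin (8 * m) → Bool :=
  fun k => decide (coordI k = v (coordJ k))

lemma uOf_inj {m : ℕ} : Function.Injective (uOf (m := m)) := by
  intro v v' h
  funext j
  have h1 := congrFun h (pairK j (v j))
  simp [uOf, coordI_pairK, coordJ_pairK] at h1
  exact h1

lemma uOf_false_iff {m : ℕ} (v : Fin m → Fin 8) (C : Fin m → Finset (Fin 8)) :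
    (∀ k ∈ univ.filter (fun k : Fin (8*m) => ¬ (coordI k ∈ C (coordJ k))), uOf v k = false)
      ↔ ∀ j, v j ∈ C j := by
  constructor
  · intro h j
    by_contra hj
    have hk : pairK j (v j) ∈ univ.filter
        (fun k : Fin (8*m) => ¬ (coordI k ∈ C (coordJ k))) := by
      simp [coordI_pairK, coordJ_pairK, hj]
    have := h _ hk
    simp [uOf, coordI_pairK, coordJ_pairK] at this
  · intro h k hk
    simp only [mem_filter, mem_univ, true_and] at hk
    simp only [uOf, decide_eq_false_iff_not]
    intro heq
    exact hk (heq ▸ h (coordJ k))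

/-! ### Main theorem -/

/-- For every positive integer `d` divisible by `8`, there is
a subset `W ⊆ B_d` such that for every `f : W → {-1,+1}` there is a positive
integer `a` with `|∑_{b ∈ W, a ∣ b} f(b)| ≥ 2^{d/16}/(2e)`; i.e. the hereditary
discrepancy of homogeneous arithmetic progressions restricted to `B_d` is at
least `2^{d/16}/(2e)`. -/
theorem HAP_herdisc_on_Bset (d : ℕ) (hd : 0 < d) (h8 : 8 ∣ d) :
    ∃ W : Finset ℕ, W ⊆ Bset d ∧
      ∀ f : ℕ → ℝ, (∀ b ∈ W, f b = 1 ∨ f b = -1) →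
        ∃ a : ℕ, 0 < a ∧
          (2 : ℝ) ^ ((d : ℝ) / 16) / (2 * Real.exp 1) ≤
            |∑ b ∈ W.filter (fun b => a ∣ b), f b| := by
  obtain ⟨m, rfl⟩ := h8
  refine ⟨Finset.image (fun v : Fin m → Fin 8 => bOf (uOf v)) univ, ?_, ?_⟩
  · intro b hb
    simp only [Finset.mem_image] at hb
    obtain ⟨v, -, rfl⟩ := hb
    simp only [Bset]
    exact Finset.mem_image_of_mem _ (Finset.mem_univ (uOf v))
  · intro f hf
    have hx1 : ∀ v : Fin m → Fin 8, ((fun v : Fin m → Fin 8 => f (bOf (uOf v))) v)^2 = 1 := by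
      intro v
      rcases hf (bOf (uOf v)) (Finset.mem_image_of_mem _ (Finset.mem_univ v)) with h | h <;>
        simp [h]
    obtain ⟨C, hC⟩ := core (fun v : Fin m → Fin 8 => f (bOf (uOf v))) hx1
    refine ⟨∏ k ∈ univ.filter (fun k : Fin (8*m) => ¬ (coordI k ∈ C (coordJ k))),
      pPrime k false, Finset.prod_pos fun k _ => (pPrime_prime k false).pos, ?_⟩
    have himg : (Finset.image (fun v : Fin m → Fin 8 => bOf (uOf v)) univ).filter
        (fun b => (∏ k ∈ univ.filter (fun k : Fin (8*m) => ¬ (coordI k ∈ C (coordJ k))),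
          pPrime k false) ∣ b)
        = Finset.image (fun v : Fin m → Fin 8 => bOf (uOf v))
            (univ.filter (fun v => ∀ j, v j ∈ C j)) := by
      rw [Finset.filter_image]
      congr 1
      apply Finset.filter_congr
      intro v _
      rw [prod_false_dvd_iff]
      exact uOf_false_iff v C
    rw [himg, Finset.sum_image (fun v _ w _ h => uOf_inj (bOf_injective h))]
    have habs : (2:ℝ) ^ ((m:ℝ)/2)
        ≤ |rsum (fun v : Fin m → Fin 8 => f (bOf (uOf v))) C| := by
      have h1 : Real.sqrt ((2:ℝ)^m)
          ≤ Real.sqrt ((rsum (fun v : Fin m → Fin 8 => f (bOf (uOf v))) C)^2) :=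
        Real.sqrt_le_sqrt hC
      rw [Real.sqrt_sq_eq_abs] at h1
      refine le_trans (le_of_eq ?_) h1
      rw [Real.sqrt_eq_rpow, ← Real.rpow_natCast 2 m, ← Real.rpow_mul (by norm_num)]
      norm_num
      ring_nf
    calc (2:ℝ) ^ ((((8*m : ℕ)) : ℝ) / 16) / (2 * Real.exp 1)
        ≤ (2:ℝ) ^ ((((8*m : ℕ)) : ℝ) / 16) := by
          apply div_le_self (by positivity)
          nlinarith [Real.add_one_le_exp 1]
      _ = (2:ℝ) ^ ((m:ℝ)/2) := by
          congr 1
          push_cast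
          ring
      _ ≤ _ := habs
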